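/- On a cycle graph with V ≥ 5 vertices where each vertex except one (the hole) is labeled with one of two spin labels, the group of label permutations achievable by sliding the hole around (returning the hole to its start) is generated by a single (V−1)-cycle, hence is cyclic of order V−1 and has order V−1. -/

import Mathlib

/-- A move in the sliding puzzle: the hole at vertex `a` is transposed with the
tile at an adjacent vertex `b`. -/
def PMove {V L : Type*} [DecidableEq V] (adj : V → V → Prop)
    (c c' : V → Option L) : Prop :=
  ∃ a b, adj a b ∧ c a = none ∧ c' = c ∘ Equiv.swap a b

/-- Reachability by a finite sequence of hole moves. -/
def PReach {V L : Type*} [DecidableEq V] (adj : V → V → Prop) :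
    (V → Option L) → (V → Option L) → Prop :=
  Relation.ReflTransGen (PMove adj)

/-- Adjacency on the cycle graph `C_V` with vertices `ZMod V`. -/
def cycAdj (V : ℕ) (i j : ZMod V) : Prop := j = i + 1 ∨ i = j + 1

open Equiv
set_option maxRecDepth 8000
set_option linter.unusedSectionVars false


namespace CycPuzzle
variable (V : ℕ)
def ee : ZMod (V-1) → ZMod V := fun i => 1 + ((i.val : ℕ) : ZMod V)
def rr : Equiv.Perm (ZMod V) := Equiv.swap (0 : ZMod V) (-1) * Equiv.addRight (-1 : ZMod V)
variable {V}

section basic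
variable (hV : 5 ≤ V)
include hV

lemma nz1 : NeZero (V-1) := ⟨by omega⟩

lemma cast_inj {a b : ℕ} (ha : a < V) (hb : b < V) (h : (a : ZMod V) = b) : a = b := by
  haveI : NeZero V := ⟨by omega⟩
  have := congrArg ZMod.val h
  rwa [ZMod.val_cast_of_lt ha, ZMod.val_cast_of_lt hb] at this

lemma cast_ne_zero {a : ℕ} (ha0 : 0 < a) (ha : a < V) : (a : ZMod V) ≠ 0 := by
  intro h
  have := cast_inj hV (a := a) (b := 0) ha (by omega) (by simpa using h)
  omega

lemma ee_val {i : ZMod (V-1)} : i.val < V - 1 := by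
  haveI := nz1 hV
  exact ZMod.val_lt i

lemma ee_ne_zero (i : ZMod (V-1)) : ee V i ≠ 0 := by
  have hi := ee_val hV (i := i)
  have : ((1 + i.val : ℕ) : ZMod V) ≠ 0 := cast_ne_zero hV (by omega) (by omega)
  simpa [ee, Nat.cast_add] using this

lemma ee_inj {i j : ZMod (V-1)} (h : ee V i = ee V j) : i = j := by
  haveI := nz1 hV
  have hi := ee_val hV (i := i)
  have hj := ee_val hV (i := j)
  have h' : ((1 + i.val : ℕ) : ZMod V) = ((1 + j.val : ℕ) : ZMod V) := by
    push_cast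
    simpa [ee] using h
  have := cast_inj hV (by omega) (by omega) h'
  have : i.val = j.val := by omega
  exact ZMod.val_injective _ this

lemma ee_surj {x : ZMod V} (hx : x ≠ 0) : ∃ i, ee V i = x := by
  haveI : NeZero V := ⟨by omega⟩
  haveI := nz1 hV
  have hxv : 0 < x.val := by
    rcases Nat.eq_zero_or_pos x.val with h | h
    · exact absurd (by rw [← ZMod.natCast_rightInverse x, h]; simp) hx
    · exact h
  have hxlt : x.val < V := ZMod.val_lt x
  refine ⟨((x.val - 1 : ℕ) : ZMod (V-1)), ?_⟩
  have hv : (((x.val - 1 : ℕ) : ZMod (V-1))).val = x.val - 1 :=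
    ZMod.val_cast_of_lt (by omega)
  rw [ee, hv]
  rw [show (1 : ZMod V) = ((1:ℕ) : ZMod V) by simp, ← Nat.cast_add]
  rw [show 1 + (x.val - 1) = x.val by omega]
  exact ZMod.natCast_rightInverse x

-- `rr` fixes 0
lemma rr_zero : rr V 0 = 0 := by
  simp [rr, Equiv.Perm.mul_apply]

-- sub-one val lemma in ZMod (V-1)
lemma val_sub_one {i : ZMod (V-1)} (hi : i ≠ 0) : (i - 1).val = i.val - 1 := by
  haveI := nz1 hV
  have h1 : i.val < V - 1 := ZMod.val_lt i
  have h0 : 0 < i.val := by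
    rcases Nat.eq_zero_or_pos i.val with h | h
    · exact absurd (by rw [← ZMod.natCast_rightInverse i, h]; simp) hi
    · exact h
  have key : ((i.val - 1 : ℕ) : ZMod (V-1)) + 1 = i := by
    rw [show (1 : ZMod (V-1)) = ((1:ℕ) : ZMod (V-1)) by simp, ← Nat.cast_add]
    rw [show i.val - 1 + 1 = i.val by omega]
    exact ZMod.natCast_rightInverse i
  have : i - 1 = ((i.val - 1 : ℕ) : ZMod (V-1)) := sub_eq_iff_eq_add.mpr key.symm
  rw [this, ZMod.val_cast_of_lt (by omega)]

lemma rr_ee (i : ZMod (V-1)) : rr V (ee V i) = ee V (i - 1) := by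
  haveI : NeZero V := ⟨by omega⟩
  haveI := nz1 hV
  by_cases hi : i = 0
  · subst hi
    have h1 : ((-1 : ZMod (V-1))).val = V - 2 := by
      have : (-1 : ZMod (V-1)) = (((V-2 : ℕ)) : ZMod (V-1)) := by
        have hz : (((V-1 : ℕ)) : ZMod (V-1)) = 0 := ZMod.natCast_self _
        have h2 : ((V-1:ℕ) : ZMod (V-1)) = ((V-2:ℕ) : ZMod (V-1)) + 1 := by
          push_cast [show V-1 = (V-2)+1 by omega]; ring
        linear_combination h2 - hz
      rw [this, ZMod.val_cast_of_lt (by omega)]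
    rw [show (0 : ZMod (V-1)) - 1 = -1 by ring]
    simp only [ee, h1, ZMod.val_zero, Nat.cast_zero, add_zero]
    rw [rr]
    simp only [Equiv.Perm.mul_apply, Equiv.coe_addRight]
    rw [show (1 : ZMod V) + -1 = 0 by ring, Equiv.swap_apply_left]
    rw [show ((V-2:ℕ) : ZMod V) = -1 + -1 by
      have hz : ((V:ℕ) : ZMod V) = 0 := ZMod.natCast_self _
      have h2 : ((V:ℕ):ZMod V) = ((V-2:ℕ):ZMod V) + 2 := by
        rw [show (2:ZMod V) = ((2:ℕ):ZMod V) by simp, ← Nat.cast_add, show V-2+2 = V by omega]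
      linear_combination hz - h2]
    ring
  · have h1 : i.val < V - 1 := ZMod.val_lt i
    have h0 : 0 < i.val := by
      rcases Nat.eq_zero_or_pos i.val with h | h
      · exact absurd (by rw [← ZMod.natCast_rightInverse i, h]; simp) hi
      · exact h
    rw [rr]
    simp only [Equiv.Perm.mul_apply, Equiv.coe_addRight, ee]
    rw [show (1 : ZMod V) + (i.val : ZMod V) + -1 = (i.val : ZMod V) by ring]
    rw [Equiv.swap_apply_of_ne_of_ne (cast_ne_zero hV h0 (Nat.lt_of_lt_of_le h1 (Nat.sub_le V 1)))
      (by
        intro h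
        have : ((i.val + 1 : ℕ) : ZMod V) = ((0 : ℕ) : ZMod V) := by
          push_cast
          rw [h]
          ring
        have := cast_inj hV (by omega) (by omega) this
        omega)]
    rw [val_sub_one hV hi]
    rw [show (1 : ZMod V) + ((i.val - 1 : ℕ) : ZMod V) = ((1 + (i.val - 1) : ℕ) : ZMod V) by push_cast; ring]
    rw [show 1 + (i.val - 1) = i.val by omega]

lemma rr_pow_ee (m : ℕ) (i : ZMod (V-1)) : ((rr V) ^ m) (ee V i) = ee V (i - m) := by
  induction m generalizing i with
  | zero => simp
  | succ n ih =>
    rw [pow_succ, Equiv.Perm.mul_apply, rr_ee hV, ih (i - 1)]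
    congr 1
    push_cast
    ring

lemma one_ne_zero' : (1 : ZMod (V-1)) ≠ 0 := by
  haveI := nz1 hV
  intro h
  have : ((1:ℕ) : ZMod (V-1)) = ((0:ℕ) : ZMod (V-1)) := by simpa using h
  have := congrArg ZMod.val this
  rw [ZMod.val_cast_of_lt (by omega), ZMod.val_cast_of_lt (by omega)] at this
  omega

lemma val_neg_one : ((-1 : ZMod (V-1))).val = V - 2 := by
  haveI := nz1 hV
  have : (-1 : ZMod (V-1)) = (((V-2 : ℕ)) : ZMod (V-1)) := by
    have hz : (((V-1 : ℕ)) : ZMod (V-1)) = 0 := ZMod.natCast_self _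
    have h2 : ((V-1:ℕ) : ZMod (V-1)) = ((V-2:ℕ) : ZMod (V-1)) + 1 := by
      push_cast [show V-1 = (V-2)+1 by omega]; ring
    linear_combination h2 - hz
  rw [this, ZMod.val_cast_of_lt (by omega)]

lemma castVm1 : ((V-1 : ℕ) : ZMod V) = -1 := by
  have hz : ((V:ℕ) : ZMod V) = 0 := ZMod.natCast_self _
  have h2 : ((V:ℕ):ZMod V) = ((V-1:ℕ):ZMod V) + 1 := by
    rw [show (1:ZMod V) = ((1:ℕ):ZMod V) by simp, ← Nat.cast_add, show V-1+1 = V by omega]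
  linear_combination hz - h2

lemma ee_zero : ee V (0 : ZMod (V-1)) = 1 := by simp [ee]

lemma ee_neg_one : ee V (-1 : ZMod (V-1)) = -1 := by
  rw [ee, val_neg_one hV]
  rw [show (1:ZMod V) + ((V-2:ℕ):ZMod V) = ((V-1:ℕ):ZMod V) by
    rw [show (1:ZMod V) = ((1:ℕ):ZMod V) by simp, ← Nat.cast_add, show 1+(V-2) = V-1 by omega]]
  exact castVm1 hV

lemma val_add_one {i : ZMod (V-1)} (hi : i ≠ -1) : (i + 1).val = i.val + 1 := by
  haveI := nz1 hV
  have h1 : i + 1 ≠ 0 := fun h => hi (by linear_combination h)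
  have h2 := val_sub_one hV h1
  rw [show i + 1 - 1 = i by ring] at h2
  have h3 : 0 < (i+1).val := by
    rcases Nat.eq_zero_or_pos (i+1).val with h | h
    · exact absurd (by rw [← ZMod.natCast_rightInverse (i+1), h]; simp) h1
    · exact h
  omega
lemma rr_pow_zero (m : ℕ) : ((rr V) ^ m) 0 = 0 := by
  induction m with
  | zero => simp
  | succ n ih => rw [pow_succ, Equiv.Perm.mul_apply, rr_zero hV, ih]

lemma rr_zpow_neg_ee (m : ℕ) (i : ZMod (V-1)) :
    ((rr V) ^ (-(m:ℤ))) (ee V i) = ee V (i + m) := by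
  rw [zpow_neg, zpow_natCast]
  have : ((rr V) ^ m) (ee V (i + m)) = ee V i := by
    rw [rr_pow_ee hV]; congr 1; ring
  rw [← this]; exact Equiv.symm_apply_apply _ _

variable (V)

/-- moving the hole `j` steps backwards around the cycle -/
def pp : ℕ → Equiv.Perm (ZMod V)
  | 0 => 1
  | (j+1) => pp j * Equiv.swap (-((j:ℕ) : ZMod V)) (-(((j+1):ℕ) : ZMod V))

variable {V}

lemma pp_hole (j : ℕ) : pp V j (-((j:ℕ) : ZMod V)) = 0 := by
  induction j with
  | zero => simp [pp]
  | succ n ih =>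
    rw [pp, Equiv.Perm.mul_apply, Equiv.swap_apply_right]
    exact ih

lemma pp_reach (c : ZMod V → Option (ZMod V)) (hc : c 0 = none) (j : ℕ) :
    PReach (cycAdj V) c (c ∘ pp V j) := by
  induction j with
  | zero =>
    have : c ∘ pp V 0 = c := by funext x; simp [pp]
    rw [this]
    exact Relation.ReflTransGen.refl
  | succ n ih =>
    refine Relation.ReflTransGen.tail ih ?_
    refine ⟨-((n:ℕ) : ZMod V), -(((n+1):ℕ) : ZMod V), Or.inr (by push_cast; ring), ?_, ?_⟩
    · show c (pp V n (-((n:ℕ) : ZMod V))) = none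
      rw [pp_hole hV]; exact hc
    · funext x
      show c (pp V (n+1) x) = c (pp V n (Equiv.swap _ _ x))
      rw [pp, Equiv.Perm.mul_apply]

lemma pp_char (j : ℕ) : j ≤ V - 1 →
    (∀ i : ℕ, i < j → pp V j (-((i:ℕ) : ZMod V)) = -((i:ℕ) : ZMod V) - 1) ∧
    (∀ x : ZMod V, (∀ i : ℕ, i ≤ j → x ≠ -((i:ℕ) : ZMod V)) → pp V j x = x) := by
  induction j with
  | zero =>
    intro _
    constructor
    · intro i hi; omega
    · intro x _; simp [pp]
  | succ j IH =>
    intro hj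
    obtain ⟨IH1, IH2⟩ := IH (by omega)
    have hcast : ∀ a b : ℕ, a < V → b < V → a ≠ b →
        -((a:ℕ) : ZMod V) ≠ -((b:ℕ) : ZMod V) := by
      intro a b ha hb hab h
      exact hab (cast_inj hV ha hb (by linear_combination -h))
    constructor
    · intro i hi
      rw [pp, Equiv.Perm.mul_apply]
      rcases Nat.lt_or_ge i j with hij | hij
      · rw [Equiv.swap_apply_of_ne_of_ne (hcast i j (by omega) (by omega) (by omega))
          (hcast i (j+1) (by omega) (by omega) (by omega))]
        exact IH1 i hij
      · have hij' : i = j := by omega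
        subst hij'
        rw [Equiv.swap_apply_left]
        rw [IH2 _ (fun i' hi' => (hcast (i+1) i' (by omega) (by omega) (by omega)))]
        push_cast; ring
    · intro x hx
      rw [pp, Equiv.Perm.mul_apply]
      rw [Equiv.swap_apply_of_ne_of_ne (hx j (by omega)) (hx (j+1) (by omega))]
      exact IH2 x (fun i hi => hx i (by omega))

lemma pp_penult (x : ZMod V) : pp V (V-1) x = x - 1 := by
  haveI : NeZero V := ⟨by omega⟩
  obtain ⟨C1, C2⟩ := pp_char hV (V-1) le_rfl
  have hiV : (-x).val < V := ZMod.val_lt _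
  have hxi : x = -((((-x).val : ℕ)) : ZMod V) := by
    rw [ZMod.natCast_rightInverse (-x)]; ring
  rcases Nat.lt_or_ge (-x).val (V-1) with h | h
  · rw [hxi, C1 _ h]
  · have hval : (-x).val = V - 1 := by omega
    have hx1 : x = 1 := by
      rw [hxi, hval, castVm1 hV]; ring
    rw [hx1, show (1:ZMod V) - 1 = 0 by ring]
    have := pp_hole hV (V-1)
    rwa [castVm1 hV, show -(-1 : ZMod V) = 1 by ring] at this

lemma pp_full : pp V V = rr V := by
  haveI : NeZero V := ⟨by omega⟩
  ext x
  have hVe : V = (V-1)+1 := by omega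
  rw [show pp V V = pp V ((V-1)+1) by rw [← hVe]]
  rw [pp, Equiv.Perm.mul_apply]
  rw [show ((((V-1)+1 : ℕ)) : ZMod V) = 0 by rw [← hVe]; exact ZMod.natCast_self _]
  rw [castVm1 hV, show -(-1:ZMod V) = 1 by ring, show -(0:ZMod V) = 0 by ring]
  rw [rr]
  simp only [Equiv.Perm.mul_apply, Equiv.coe_addRight]
  by_cases hx1 : x = 1
  · subst hx1
    rw [Equiv.swap_apply_left, pp_penult hV, show (1:ZMod V) + -1 = 0 by ring, Equiv.swap_apply_left]
    ring
  by_cases hx0 : x = 0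
  · subst hx0
    rw [Equiv.swap_apply_right, pp_penult hV, show (0:ZMod V) + -1 = -1 by ring, Equiv.swap_apply_right]
    ring
  · rw [Equiv.swap_apply_of_ne_of_ne hx1 hx0, pp_penult hV,
      Equiv.swap_apply_of_ne_of_ne (by intro h; exact hx1 (by linear_combination h))
        (by intro h; exact hx0 (by linear_combination h))]
    ring

lemma rr_reach (c : ZMod V → Option (ZMod V)) (hc : c 0 = none) :
    PReach (cycAdj V) c (c ∘ rr V) := by
  have := pp_reach hV c hc V
  rwa [pp_full hV] at this

lemma rr_reach_pow (c : ZMod V → Option (ZMod V)) (hc : c 0 = none) (m : ℕ) :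
    PReach (cycAdj V) c (c ∘ ⇑((rr V) ^ m)) := by
  induction m with
  | zero =>
    have : c ∘ ⇑((rr V) ^ 0) = c := by funext x; simp
    rw [this]
    exact Relation.ReflTransGen.refl
  | succ n ih =>
    refine Relation.ReflTransGen.trans ih ?_
    have h0 : (c ∘ ⇑((rr V) ^ n)) 0 = none := by
      show c (((rr V) ^ n) 0) = none
      rw [rr_pow_zero hV]; exact hc
    have := rr_reach hV _ h0
    have heq : (c ∘ ⇑((rr V) ^ n)) ∘ (rr V) = c ∘ ⇑((rr V) ^ (n+1)) := by
      funext x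
      show c (((rr V) ^ n) ((rr V) x)) = c (((rr V) ^ (n+1)) x)
      rw [pow_succ, Equiv.Perm.mul_apply]
    rwa [heq] at this
lemma val_pos {i : ZMod (V-1)} (hi : i ≠ 0) : 0 < i.val := by
  haveI := nz1 hV
  rcases Nat.eq_zero_or_pos i.val with h | h
  · exact absurd (by rw [← ZMod.natCast_rightInverse i, h]; simp) hi
  · exact h

variable (V)

def Inv (c : ZMod V → Option (ZMod V)) : Prop :=
  ∃ (h : ZMod V) (k : ZMod (V-1)), c h = none ∧
    ∀ i : ZMod (V-1), c (h + ee V i) = some (ee V (i + k))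

variable {V}

lemma inv_move {c c' : ZMod V → Option (ZMod V)} (hm : PMove (cycAdj V) c c')
    (hc : Inv V c) : Inv V c' := by
  obtain ⟨a, b, hadj, hhole, rfl⟩ := hm
  obtain ⟨h, k, hh, hw⟩ := hc
  have ha : a = h := by
    by_contra hne
    obtain ⟨i, hi⟩ := ee_surj hV (sub_ne_zero.mpr hne)
    have h2 := hw i
    rw [show h + ee V i = a by rw [hi]; ring, hhole] at h2
    exact nomatch h2
  subst ha
  rcases hadj with hb | hb
  · subst hb
    refine ⟨a + 1, k + 1, ?_, ?_⟩
    · show c (Equiv.swap a (a+1) (a+1)) = none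
      rw [Equiv.swap_apply_right]; exact hh
    · intro i
      show c (Equiv.swap a (a+1) (a + 1 + ee V i)) = some (ee V (i + (k+1)))
      by_cases hi : i = -1
      · subst hi
        rw [ee_neg_one hV, show a + 1 + (-1 : ZMod V) = a by ring, Equiv.swap_apply_left,
          show (-1 : ZMod (V-1)) + (k+1) = 0 + k by ring]
        have := hw 0
        rwa [ee_zero hV] at this
      · have hval := val_add_one hV hi
        have harg : a + 1 + ee V i = a + ee V (i + 1) := by
          rw [ee, ee, hval]; push_cast; ring
        rw [harg,
          Equiv.swap_apply_of_ne_of_ne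
            (by intro hx; exact ee_ne_zero hV (i+1) (by linear_combination hx))
            (by
              intro hx
              have h1 : ee V (i+1) = ee V 0 := by rw [ee_zero hV]; linear_combination hx
              exact hi (by linear_combination ee_inj hV h1)),
          show i + (k+1) = (i+1) + k by ring]
        exact hw (i+1)
  · have hb' : b = a - 1 := by linear_combination -hb
    subst hb'
    refine ⟨a - 1, k - 1, ?_, ?_⟩
    · show c (Equiv.swap a (a-1) (a-1)) = none
      rw [Equiv.swap_apply_right]; exact hh
    · intro i
      show c (Equiv.swap a (a-1) (a - 1 + ee V i)) = some (ee V (i + (k-1)))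
      by_cases hi : i = 0
      · subst hi
        rw [ee_zero hV, show a - 1 + (1 : ZMod V) = a by ring, Equiv.swap_apply_left,
          show (0 : ZMod (V-1)) + (k-1) = -1 + k by ring]
        have := hw (-1)
        rwa [ee_neg_one hV, show a + (-1:ZMod V) = a - 1 by ring] at this
      · have hval := val_sub_one hV hi
        have h0 : 0 < i.val := val_pos hV hi
        have harg : a - 1 + ee V i = a + ee V (i - 1) := by
          rw [ee, ee, hval, Nat.cast_sub h0]; push_cast; ring
        rw [harg,
          Equiv.swap_apply_of_ne_of_ne
            (by intro hx; exact ee_ne_zero hV (i-1) (by linear_combination hx))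
            (by
              intro hx
              have h1 : ee V (i-1) = ee V (-1) := by rw [ee_neg_one hV]; linear_combination hx
              exact hi (by linear_combination ee_inj hV h1)),
          show i + (k-1) = (i-1) + k by ring]
        exact hw (i-1)

lemma inv_reach {c c' : ZMod V → Option (ZMod V)} (hr : PReach (cycAdj V) c c')
    (hc : Inv V c) : Inv V c' := by
  induction hr with
  | refl => exact hc
  | tail _ hstep ih => exact inv_move hV hstep ih
end basic
end CycPuzzle


open CycPuzzle in
/-- On a cycle with `V ≥ 5` vertices, with distinguishable tiles and the hole at `0`,
the permutations of tiles achievable by hole moves returning the hole to its start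
form exactly the cyclic group generated by the `(V-1)`-cycle `r` obtained by moving
the hole once around the cycle; in particular this group is cyclic of order `V - 1`. -/
theorem stmt0 (V : ℕ) [NeZero V] (hV : 5 ≤ V)
    (c0 : ZMod V → Option (ZMod V))
    (hc0 : c0 = fun v => if v = 0 then none else some v)
    (r : Equiv.Perm (ZMod V))
    (hr : r = Equiv.swap (0 : ZMod V) (-1) * Equiv.addRight (-1 : ZMod V)) :
    r.IsCycle ∧ r.support.card = V - 1 ∧
    {σ : Equiv.Perm (ZMod V) | σ 0 = 0 ∧ PReach (cycAdj V) c0 (c0 ∘ ⇑σ)} =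
      ↑(Subgroup.zpowers r) ∧
    orderOf r = V - 1 := by
  haveI := nz1 hV
  subst hc0
  have hrrr : r = rr V := hr
  subst hrrr
  have hcyc : (rr V).IsCycle := by
    refine ⟨ee V 0, ?_, ?_⟩
    · rw [rr_ee hV, show (0:ZMod (V-1)) - 1 = -1 by ring, ee_neg_one hV, ee_zero hV]
      intro h
      have h2 : ((2:ℕ) : ZMod V) = ((0:ℕ) : ZMod V) := by push_cast; linear_combination -h
      have := cast_inj hV (by omega) (by omega) h2
      omega
    · intro y hy
      have hy0 : y ≠ 0 := by intro h; rw [h, rr_zero hV] at hy; exact hy rfl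
      obtain ⟨i, rfl⟩ := ee_surj hV hy0
      refine ⟨-((i.val : ℕ) : ℤ), ?_⟩
      rw [rr_zpow_neg_ee hV, zero_add, ZMod.natCast_rightInverse i]
  have hsupp : (rr V).support = {(0 : ZMod V)}ᶜ := by
    ext x
    simp only [Equiv.Perm.mem_support, Finset.mem_compl, Finset.mem_singleton]
    constructor
    · intro h hx0
      subst hx0
      exact h (rr_zero hV)
    · intro hx0
      obtain ⟨i, rfl⟩ := ee_surj hV hx0
      rw [rr_ee hV]
      intro h
      exact one_ne_zero' hV (by linear_combination -(ee_inj hV h))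
  have hcard : (rr V).support.card = V - 1 := by
    rw [hsupp, Finset.card_compl, Finset.card_singleton, ZMod.card]
  have horder : orderOf (rr V) = V - 1 := by rw [hcyc.orderOf, hcard]
  refine ⟨hcyc, hcard, ?_, horder⟩
  ext σ
  simp only [Set.mem_setOf_eq, SetLike.mem_coe]
  constructor
  · rintro ⟨hσ0, hre⟩
    have hinv0 : Inv V (fun v => if v = 0 then none else some v) :=
      ⟨0, 0, by simp, by
        intro i
        rw [zero_add, add_zero]
        exact if_neg (ee_ne_zero hV i)⟩
    obtain ⟨h, k, hh, hw⟩ := inv_reach hV hre hinv0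
    have hσh : σ h = 0 := by
      by_contra hne
      simp only [Function.comp_apply, if_neg hne] at hh
      exact nomatch hh
    have h0 : h = 0 := σ.injective (by rw [hσh, hσ0])
    subst h0
    have hσe : ∀ i, σ (ee V i) = ee V (i + k) := by
      intro i
      have hwi := hw i
      rw [zero_add] at hwi
      simp only [Function.comp_apply] at hwi
      by_cases hz : σ (ee V i) = 0
      · rw [if_pos hz] at hwi; exact nomatch hwi
      · rw [if_neg hz] at hwi; exact Option.some.inj hwi
    have hmk : ((((-k : ZMod (V-1))).val : ℕ) : ZMod (V-1)) = -k := ZMod.natCast_rightInverse _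
    have hσ : σ = (rr V) ^ ((-k : ZMod (V-1))).val := by
      ext x
      by_cases hx : x = 0
      · subst hx; rw [hσ0, rr_pow_zero hV]
      · obtain ⟨i, rfl⟩ := ee_surj hV hx
        rw [hσe, rr_pow_ee hV]
        congr 1
        rw [hmk]
        ring
    rw [hσ]
    exact (Subgroup.zpowers (rr V)).pow_mem (Subgroup.mem_zpowers _) _
  · intro hmem
    obtain ⟨m, rfl⟩ := mem_powers_iff_mem_zpowers.mpr hmem
    refine ⟨rr_pow_zero hV m, ?_⟩
    exact rr_reach_pow hV _ (by simp) m
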